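/- Let k = [[1,0],[0,−1]] and define ψ : sl(2,ℝ) → sl(2,ℝ) by ψ(α) = k·α·k. Then ψ∘ψ = Id, for all α, γ ∈ sl(2,ℝ) one has g((α,ψ(α)), J(γ,ψ(γ))) = 0, and furthermore P(i,ψ(i)) = −(i,ψ(i)), P(j,ψ(j)) = −(j,ψ(j)), P(k,ψ(k)) = (k,ψ(k)), where i = [[0,1],[−1,0]] and j = [[0,1],[1,0]]. (This is the algebraic content of the facts that the immersion u ↦ (u, k·u·k) of SL(2,ℝ) into SL(2,ℝ)×SL(2,ℝ) is Lagrangian with constant angle functions (π,π,0).) -/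
import Mathlib


open Matrix

/-- The indefinite inner product `⟨a,b⟩ = -(1/2)·Trace(adj(a)·b)` on 2×2 real matrices. -/
noncomputable def ip (a b : Matrix (Fin 2) (Fin 2) ℝ) : ℝ :=
  -(1/2 : ℝ) * (a.adjugate * b).trace

/-- The product metric `⟨(α,β),(γ,δ)⟩_E = ⟨α,γ⟩ + ⟨β,δ⟩`. -/
noncomputable def ipE (X Y : Matrix (Fin 2) (Fin 2) ℝ × Matrix (Fin 2) (Fin 2) ℝ) : ℝ :=
  ip X.1 Y.1 + ip X.2 Y.2

/-- The nearly Kähler metric `g`. -/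
noncomputable def g (X Y : Matrix (Fin 2) (Fin 2) ℝ × Matrix (Fin 2) (Fin 2) ℝ) : ℝ :=
  (2/3 : ℝ) * ipE X Y - (1/3 : ℝ) * ipE (X.2, X.1) Y

/-- The almost complex structure `J(α,β) = (1/√3)·(α − 2β, 2α − β)`. -/
noncomputable def Jmap (X : Matrix (Fin 2) (Fin 2) ℝ × Matrix (Fin 2) (Fin 2) ℝ) :
    Matrix (Fin 2) (Fin 2) ℝ × Matrix (Fin 2) (Fin 2) ℝ :=
  (Real.sqrt 3)⁻¹ • (X.1 - (2:ℝ) • X.2, (2:ℝ) • X.1 - X.2)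

/-- The almost product structure `P(α,β) = (β,α)`. -/
def Pmap (X : Matrix (Fin 2) (Fin 2) ℝ × Matrix (Fin 2) (Fin 2) ℝ) :
    Matrix (Fin 2) (Fin 2) ℝ × Matrix (Fin 2) (Fin 2) ℝ :=
  (X.2, X.1)

/-- The cross product `α×β = (1/2)(αβ − βα)` on `sl(2,ℝ)`. -/
noncomputable def cross (a b : Matrix (Fin 2) (Fin 2) ℝ) : Matrix (Fin 2) (Fin 2) ℝ :=
  (1/2 : ℝ) • (a * b - b * a)

/-- The tensor `G`. -/
noncomputable def Gmap (X Y : Matrix (Fin 2) (Fin 2) ℝ × Matrix (Fin 2) (Fin 2) ℝ) :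
    Matrix (Fin 2) (Fin 2) ℝ × Matrix (Fin 2) (Fin 2) ℝ :=
  (2 / (3 * Real.sqrt 3)) •
    (-(cross X.1 Y.1) - cross X.1 Y.2 + cross Y.1 X.2 + (2:ℝ) • cross X.2 Y.2,
     -((2:ℝ) • cross X.1 Y.1) + cross X.1 Y.2 - cross Y.1 X.2 + cross X.2 Y.2)

/-- The immersion `u ↦ (u, k·u·k)` is Lagrangian with constant angle functions `(π,π,0)`. -/
theorem stmt_15 :
    let i : Matrix (Fin 2) (Fin 2) ℝ := !![0, 1; -1, 0]
    let j : Matrix (Fin 2) (Fin 2) ℝ := !![0, 1; 1, 0]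
    let k : Matrix (Fin 2) (Fin 2) ℝ := !![1, 0; 0, -1]
    let ψ : Matrix (Fin 2) (Fin 2) ℝ → Matrix (Fin 2) (Fin 2) ℝ := fun α => k * α * k
    (∀ α : Matrix (Fin 2) (Fin 2) ℝ, α.trace = 0 → ψ (ψ α) = α) ∧
    (∀ α γ : Matrix (Fin 2) (Fin 2) ℝ, α.trace = 0 → γ.trace = 0 →
      g (α, ψ α) (Jmap (γ, ψ γ)) = 0) ∧
    Pmap (i, ψ i) = -(i, ψ i) ∧
    Pmap (j, ψ j) = -(j, ψ j) ∧
    Pmap (k, ψ k) = (k, ψ k) := by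
  refine ⟨?_, ?_, ?_, ?_, ?_⟩
  · intro α hα
    ext a b
    fin_cases a <;> fin_cases b <;>
      simp [Matrix.mul_apply, Matrix.vecMul, dotProduct, Fin.sum_univ_two]
  · intro α γ hα hγ
    have hα' : α 1 1 = -α 0 0 := by
      have := hα; simp [Matrix.trace_fin_two] at this; linarith
    have hγ' : γ 1 1 = -γ 0 0 := by
      have := hγ; simp [Matrix.trace_fin_two] at this; linarith
    simp only [g, ipE, ip, Jmap, Prod.smul_mk, Matrix.trace_fin_two,
      Matrix.adjugate_fin_two, Matrix.mul_apply, Fin.sum_univ_two,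
      Matrix.smul_apply, Matrix.sub_apply, Matrix.of_apply, Matrix.cons_val',
      Matrix.cons_val_zero, Matrix.cons_val_one, Matrix.head_cons,
      Matrix.head_fin_const, Matrix.empty_val', Matrix.cons_val_fin_one,
      smul_eq_mul, hα', hγ']
    ring
  · ext a b <;> fin_cases a <;> fin_cases b <;>
      simp [Pmap, Matrix.mul_apply, Fin.sum_univ_two] <;> norm_num
  · ext a b <;> fin_cases a <;> fin_cases b <;>
      simp [Pmap, Matrix.mul_apply, Fin.sum_univ_two] <;> norm_num
  · ext a b <;> fin_cases a <;> fin_cases b <;>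
      simp [Pmap, Matrix.mul_apply, Fin.sum_univ_two] <;> norm_num
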